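/- Let 0 < α < 1, 1 < p < ∞ with αp > 1, and f ∈ L^p((a,b)). Then the left Riemann–Liouville fractional integral I^α f satisfies |I^α f(x) - I^α f(y)| ≤ C‖f‖_{L^p((a,b))} |x-y|^{α-1/p} for all x,y ∈ [a,b], where C depends only on α and p; in particular I^α f extends to a Hölder continuous function of exponent α - 1/p on [a,b]. -/

import Mathlib

open MeasureTheory Real Set Filter Topology
open scoped ENNReal

/-- Left Riemann–Liouville fractional integral of order `α` on `(a, ·)`. -/
noncomputable def leftRLInt (α a : ℝ) (u : ℝ → ℝ) (x : ℝ) : ℝ :=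
  (1 / Real.Gamma α) * ∫ y in a..x, u y * (x - y) ^ (α - 1)

/-- Left Riemann–Liouville fractional derivative of order `α` on `(a, ·)`. -/
noncomputable def leftRLDeriv (α a : ℝ) (u : ℝ → ℝ) (x : ℝ) : ℝ :=
  (1 / Real.Gamma (1 - α)) * deriv (fun z => ∫ y in a..z, u y * (z - y) ^ (-α)) x

/-- Right Riemann–Liouville fractional derivative of order `α` on `ℝ`. -/
noncomputable def rightRLDerivR (α : ℝ) (φ : ℝ → ℝ) (x : ℝ) : ℝ :=
  -(1 / Real.Gamma (1 - α)) * deriv (fun z => ∫ y in Set.Ioi z, φ y * (y - z) ^ (-α)) x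

/-- Left Riemann–Liouville fractional derivative of order `α` on `ℝ` (lower limit `-∞`). -/
noncomputable def leftRLDerivR (α : ℝ) (φ : ℝ → ℝ) (x : ℝ) : ℝ :=
  (1 / Real.Gamma (1 - α)) * deriv (fun z => ∫ y in Set.Iio z, φ y * (z - y) ^ (-α)) x

/-- `v` is the left weak fractional derivative of order `α` of `u` on `Ω`:
`∫ v φ = ∫ u D₊^α φ` for all test functions `φ` compactly supported in `Ω`. -/
def IsLeftWeakFracDerivOn (α : ℝ) (Ω : Set ℝ) (u v : ℝ → ℝ) : Prop :=
  ∀ φ : ℝ → ℝ, ContDiff ℝ (⊤ : ℕ∞) φ → HasCompactSupport φ → tsupport φ ⊆ Ω →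
    ∫ x in Ω, v x * φ x = ∫ x in Ω, u x * rightRLDerivR α φ x

/-- Superadditivity of `t ↦ t ^ q` for `q ≥ 1` on nonnegative reals. -/
lemma aux_add_rpow_le {u v q : ℝ} (hu : 0 ≤ u) (hv : 0 ≤ v) (hq : 1 ≤ q) :
    u ^ q + v ^ q ≤ (u + v) ^ q := by
  lift u to NNReal using hu
  lift v to NNReal using hv
  exact_mod_cast NNReal.add_rpow_le_rpow_add u v hq

/-- Integrability of the kernel `t ↦ (d - t) ^ r` on `(c, d)` for `r > -1`. -/
lemma aux_kernel_integrable {r : ℝ} (hr : -1 < r) {c d : ℝ} (hcd : c ≤ d) :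
    IntegrableOn (fun t => (d - t) ^ r) (Set.Ioo c d) volume := by
  have h1 : IntervalIntegrable (fun s : ℝ => s ^ r) volume 0 (d - c) :=
    intervalIntegral.intervalIntegrable_rpow' hr
  have h2 := h1.comp_sub_left d
  rw [sub_zero, sub_sub_cancel] at h2
  have h3 := h2.symm
  rwa [intervalIntegrable_iff_integrableOn_Ioo_of_le hcd] at h3

/-- Value of `∫ t in c..d, (e - t) ^ r` for `r > -1`. -/
lemma aux_kernel_integral {r : ℝ} (hr : -1 < r) (c d e : ℝ) :
    ∫ t in c..d, (e - t) ^ r = ((e - c) ^ (r + 1) - (e - d) ^ (r + 1)) / (r + 1) := by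
  rw [intervalIntegral.integral_comp_sub_left (fun s : ℝ => s ^ r) e,
    integral_rpow (Or.inl hr)]

/-- The kernel `t ↦ (e - t) ^ (α - 1)` is in `L^q((c,d))` when `d ≤ e` and `(α-1)q > -1`. -/
lemma aux_kernel_memLq {α q : ℝ} (hα1 : α < 1) (hq : 0 < q) (hr : -1 < (α - 1) * q)
    {c d e : ℝ} (hcd : c ≤ d) (hde : d ≤ e) :
    MemLp (fun t => (e - t) ^ (α - 1)) (ENNReal.ofReal q)
      (volume.restrict (Set.Ioo c d)) := by
  have hmeas : Measurable fun t : ℝ => (e - t) ^ (α - 1) :=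
    (measurable_const.sub measurable_id).pow measurable_const
  have hr0 : (α - 1) * q ≤ 0 := by nlinarith
  have hint : Integrable (fun t => ‖(e - t) ^ (α - 1)‖ ^ q)
      (volume.restrict (Set.Ioo c d)) := by
    refine (aux_kernel_integrable hr hcd).mono'
      ((hmeas.norm.pow measurable_const).aestronglyMeasurable) ?_
    filter_upwards [ae_restrict_mem measurableSet_Ioo] with t ht
    have htd : 0 < d - t := sub_pos.2 ht.2
    have hte : 0 < e - t := lt_of_lt_of_le htd (by linarith)
    have h1 : ‖(e - t) ^ (α - 1)‖ = (e - t) ^ (α - 1) :=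
      Real.norm_of_nonneg (Real.rpow_nonneg hte.le _)
    rw [Real.norm_of_nonneg (Real.rpow_nonneg (norm_nonneg _) q), h1,
      ← Real.rpow_mul hte.le]
    exact Real.rpow_le_rpow_of_nonpos htd (by linarith) hr0
  have hq0 : ENNReal.ofReal q ≠ 0 := by
    simp only [ne_eq, ENNReal.ofReal_eq_zero, not_le]; exact hq
  rw [← memLp_norm_rpow_iff hmeas.aestronglyMeasurable hq0 ENNReal.ofReal_ne_top,
    ENNReal.div_self hq0 ENNReal.ofReal_ne_top, ENNReal.toReal_ofReal hq.le]
  exact memLp_one_iff_integrable.mpr hint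

/-- Hölder: product of `L^p` and `L^q` functions is integrable. -/
lemma aux_holder_integrable {p q : ℝ} (hpq : p.HolderConjugate q) {μ : Measure ℝ}
    {f g : ℝ → ℝ} (hf : MemLp f (ENNReal.ofReal p) μ)
    (hg : MemLp g (ENNReal.ofReal q) μ) :
    Integrable (fun t => f t * g t) μ := by
  rw [← memLp_one_iff_integrable]
  have h := hg.smul (φ := f) (r := 1) hf (hpqr := hpq.ennrealOfReal)
  exact h

lemma stmt10_core (α p q : ℝ) (hα : 0 < α) (hα1 : α < 1) (hpq : p.HolderConjugate q)
    (hr : -1 < (α - 1) * q)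
    (a b x y : ℝ) (f : ℝ → ℝ)
    (hf : MemLp f (ENNReal.ofReal p) (volume.restrict (Set.Ioo a b)))
    (hay : a ≤ y) (hyx : y ≤ x) (hxb : x ≤ b) :
    |leftRLInt α a f x - leftRLInt α a f y| ≤
      (1 / Real.Gamma α) * 2 * (1 / ((α - 1) * q + 1)) ^ (1 / q) *
        (∫ t in Set.Ioo a b, ‖f t‖ ^ p) ^ (1 / p) * (x - y) ^ (α - 1 / p) := by
  have hq1 : 1 < q := hpq.symm.lt
  have hq0 : 0 < q := by linarith
  have hβ0 : 0 < (α - 1) * q + 1 := by linarith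
  have hΓ : 0 < Real.Gamma α := Real.Gamma_pos_of_pos hα
  have hax : a ≤ x := hay.trans hyx
  have hyb : y ≤ b := hyx.trans hxb
  have hxy0 : 0 ≤ x - y := sub_nonneg.2 hyx
  set r : ℝ := (α - 1) * q with hrdef
  set β : ℝ := r + 1 with hβdef
  -- exponent identity
  have hexp : β * (1 / q) = α - 1 / p := by
    have h1 := hpq.inv_add_inv_eq_one
    have h2 : β * (1 / q) = (α - 1) + 1 / q := by
      rw [hβdef, hrdef]; field_simp
    rw [h2, one_div, one_div]; linarith
  -- N and its basic properties
  set N : ℝ := (∫ t in Set.Ioo a b, ‖f t‖ ^ p) ^ (1 / p) with hNdef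
  have hN0 : 0 ≤ N :=
    Real.rpow_nonneg (integral_nonneg fun t => Real.rpow_nonneg (norm_nonneg _) _) _
  have hfnormint : Integrable (fun t => ‖f t‖ ^ p) (volume.restrict (Set.Ioo a b)) := by
    have := hf.integrable_norm_rpow
      (by simp only [ne_eq, ENNReal.ofReal_eq_zero, not_le]; exact hpq.pos)
      ENNReal.ofReal_ne_top
    rwa [ENNReal.toReal_ofReal hpq.nonneg] at this
  -- restricted MemLp of f
  have hf_ay : MemLp f (ENNReal.ofReal p) (volume.restrict (Set.Ioo a y)) :=
    hf.mono_measure (Measure.restrict_mono (Set.Ioo_subset_Ioo le_rfl hyb) le_rfl)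
  have hf_yx : MemLp f (ENNReal.ofReal p) (volume.restrict (Set.Ioo y x)) :=
    hf.mono_measure (Measure.restrict_mono (Set.Ioo_subset_Ioo hay hxb) le_rfl)
  -- kernel Memℒq
  have hgx_ay : MemLp (fun t => (x - t) ^ (α - 1)) (ENNReal.ofReal q)
      (volume.restrict (Set.Ioo a y)) := aux_kernel_memLq hα1 hq0 hr hay hyx
  have hgy_ay : MemLp (fun t => (y - t) ^ (α - 1)) (ENNReal.ofReal q)
      (volume.restrict (Set.Ioo a y)) := aux_kernel_memLq hα1 hq0 hr hay le_rfl
  have hgx_yx : MemLp (fun t => (x - t) ^ (α - 1)) (ENNReal.ofReal q)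
      (volume.restrict (Set.Ioo y x)) := aux_kernel_memLq hα1 hq0 hr hyx le_rfl
  -- interval integrability of products
  have hI1 : IntervalIntegrable (fun t => f t * (x - t) ^ (α - 1)) volume a y := by
    rw [intervalIntegrable_iff_integrableOn_Ioo_of_le hay]
    exact aux_holder_integrable hpq hf_ay hgx_ay
  have hI2 : IntervalIntegrable (fun t => f t * (x - t) ^ (α - 1)) volume y x := by
    rw [intervalIntegrable_iff_integrableOn_Ioo_of_le hyx]
    exact aux_holder_integrable hpq hf_yx hgx_yx
  have hI3 : IntervalIntegrable (fun t => f t * (y - t) ^ (α - 1)) volume a y := by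
    rw [intervalIntegrable_iff_integrableOn_Ioo_of_le hay]
    exact aux_holder_integrable hpq hf_ay hgy_ay
  -- splitting
  have hsplit : leftRLInt α a f x - leftRLInt α a f y =
      (1 / Real.Gamma α) *
        ((∫ t in a..y, f t * ((x - t) ^ (α - 1) - (y - t) ^ (α - 1))) +
          ∫ t in y..x, f t * (x - t) ^ (α - 1)) := by
    have h1 : (∫ t in a..x, f t * (x - t) ^ (α - 1)) =
        (∫ t in a..y, f t * (x - t) ^ (α - 1)) +
          ∫ t in y..x, f t * (x - t) ^ (α - 1) :=
      (intervalIntegral.integral_add_adjacent_intervals hI1 hI2).symm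
    have h2 : (∫ t in a..y, f t * ((x - t) ^ (α - 1) - (y - t) ^ (α - 1))) =
        (∫ t in a..y, f t * (x - t) ^ (α - 1)) -
          ∫ t in a..y, f t * (y - t) ^ (α - 1) := by
      simp only [mul_sub]
      exact intervalIntegral.integral_sub hI1 hI3
    simp only [leftRLInt]
    rw [h1, h2]; ring
  -- the common bound for set integrals with Hölder
  have keybound : ∀ (g : ℝ → ℝ) (c d : ℝ), a ≤ c → c ≤ d → d ≤ b →
      MemLp g (ENNReal.ofReal q) (volume.restrict (Set.Ioo c d)) →
      MemLp f (ENNReal.ofReal p) (volume.restrict (Set.Ioo c d)) →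
      (∫ t in Set.Ioo c d, ‖g t‖ ^ q) ≤ (x - y) ^ β / β →
      |∫ t in Set.Ioo c d, f t * g t| ≤ N * ((x - y) ^ β / β) ^ (1 / q) := by
    intro g c d hac hcd hdb hg hfcd hgq
    have h1 : |∫ t in Set.Ioo c d, f t * g t| ≤ ∫ t in Set.Ioo c d, ‖f t‖ * ‖g t‖ := by
      calc |∫ t in Set.Ioo c d, f t * g t| ≤ ∫ t in Set.Ioo c d, ‖f t * g t‖ := by
            rw [← Real.norm_eq_abs]; exact norm_integral_le_integral_norm _
        _ = ∫ t in Set.Ioo c d, ‖f t‖ * ‖g t‖ := by simp only [norm_mul]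
    have h2 := integral_mul_norm_le_Lp_mul_Lq hpq hfcd hg
    have h3 : (∫ t in Set.Ioo c d, ‖f t‖ ^ p) ^ (1 / p) ≤ N := by
      apply Real.rpow_le_rpow
        (integral_nonneg fun t => Real.rpow_nonneg (norm_nonneg _) _)
        _ hpq.one_div_nonneg
      exact setIntegral_mono_set hfnormint
        (Eventually.of_forall fun t => Real.rpow_nonneg (norm_nonneg _) _)
        (HasSubset.Subset.eventuallyLE (Set.Ioo_subset_Ioo hac hdb))
    have h4 : (∫ t in Set.Ioo c d, ‖g t‖ ^ q) ^ (1 / q) ≤ ((x - y) ^ β / β) ^ (1 / q) :=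
      Real.rpow_le_rpow
        (integral_nonneg fun t => Real.rpow_nonneg (norm_nonneg _) _)
        hgq hpq.symm.one_div_nonneg
    calc |∫ t in Set.Ioo c d, f t * g t| ≤ ∫ t in Set.Ioo c d, ‖f t‖ * ‖g t‖ := h1
      _ ≤ (∫ t in Set.Ioo c d, ‖f t‖ ^ p) ^ (1 / p) *
          (∫ t in Set.Ioo c d, ‖g t‖ ^ q) ^ (1 / q) := h2
      _ ≤ N * ((x - y) ^ β / β) ^ (1 / q) := by
          apply mul_le_mul h3 h4
            (Real.rpow_nonneg
              (integral_nonneg fun t => Real.rpow_nonneg (norm_nonneg _) _) _) hN0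
  -- bound for the second term kernel integral
  have hker2 : (∫ t in Set.Ioo y x, ‖(x - t) ^ (α - 1)‖ ^ q) ≤ (x - y) ^ β / β := by
    have heq : (∫ t in Set.Ioo y x, ‖(x - t) ^ (α - 1)‖ ^ q) =
        ∫ t in Set.Ioo y x, (x - t) ^ r := by
      apply setIntegral_congr_fun measurableSet_Ioo
      intro t ht
      have htx : 0 < x - t := sub_pos.2 ht.2
      dsimp only
      rw [Real.norm_of_nonneg (Real.rpow_nonneg htx.le _), ← Real.rpow_mul htx.le]
    rw [heq, ← MeasureTheory.integral_Ioc_eq_integral_Ioo,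
      ← intervalIntegral.integral_of_le hyx, aux_kernel_integral hr y x x, sub_self,
      Real.zero_rpow (by rw [← hβdef]; exact hβ0.ne'), sub_zero]
  -- bound for the first term kernel integral
  have hker1 : (∫ t in Set.Ioo a y, ‖(x - t) ^ (α - 1) - (y - t) ^ (α - 1)‖ ^ q) ≤
      (x - y) ^ β / β := by
    have hptwise : ∀ t ∈ Set.Ioo a y,
        ‖(x - t) ^ (α - 1) - (y - t) ^ (α - 1)‖ ^ q ≤ (y - t) ^ r - (x - t) ^ r := by
      intro t ht
      have hty : 0 < y - t := sub_pos.2 ht.2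
      have htx : 0 < x - t := lt_of_lt_of_le hty (by linarith)
      have hA : (0:ℝ) < (y - t) ^ (α - 1) := Real.rpow_pos_of_pos hty _
      have hB : (0:ℝ) < (x - t) ^ (α - 1) := Real.rpow_pos_of_pos htx _
      have hBA : (x - t) ^ (α - 1) ≤ (y - t) ^ (α - 1) :=
        Real.rpow_le_rpow_of_nonpos hty (by linarith) (by linarith)
      have h1 : ‖(x - t) ^ (α - 1) - (y - t) ^ (α - 1)‖ =
          (y - t) ^ (α - 1) - (x - t) ^ (α - 1) := by
        rw [Real.norm_eq_abs, abs_sub_comm, abs_of_nonneg (by linarith)]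
      rw [h1]
      have h2 : ((y - t) ^ (α - 1) - (x - t) ^ (α - 1)) ^ q + ((x - t) ^ (α - 1)) ^ q ≤
          ((y - t) ^ (α - 1)) ^ q := by
        have := aux_add_rpow_le (sub_nonneg.2 hBA) hB.le hq1.le
        rwa [sub_add_cancel] at this
      have hAq : ((y - t) ^ (α - 1)) ^ q = (y - t) ^ r := (Real.rpow_mul hty.le _ _).symm
      have hBq : ((x - t) ^ (α - 1)) ^ q = (x - t) ^ r := (Real.rpow_mul htx.le _ _).symm
      rw [hAq, hBq] at h2
      linarith
    have hint1 : IntegrableOn (fun t => (y - t) ^ r) (Set.Ioo a y) volume :=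
      aux_kernel_integrable hr hay
    have hint2 : IntegrableOn (fun t => (x - t) ^ r) (Set.Ioo a y) volume :=
      (aux_kernel_integrable hr hax).mono_set (Set.Ioo_subset_Ioo_right hyx)
    have hgdiffint : Integrable
        (fun t => ‖(x - t) ^ (α - 1) - (y - t) ^ (α - 1)‖ ^ q)
        (volume.restrict (Set.Ioo a y)) := by
      have := (hgx_ay.sub hgy_ay).integrable_norm_rpow
        (by simp only [ne_eq, ENNReal.ofReal_eq_zero, not_le]; exact hq0)
        ENNReal.ofReal_ne_top
      rwa [ENNReal.toReal_ofReal hq0.le] at this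
    have hmono : (∫ t in Set.Ioo a y, ‖(x - t) ^ (α - 1) - (y - t) ^ (α - 1)‖ ^ q) ≤
        ∫ t in Set.Ioo a y, ((y - t) ^ r - (x - t) ^ r) :=
      setIntegral_mono_on hgdiffint (hint1.sub hint2) measurableSet_Ioo hptwise
    have hval : (∫ t in Set.Ioo a y, ((y - t) ^ r - (x - t) ^ r)) =
        ((y - a) ^ β - ((x - a) ^ β - (x - y) ^ β)) / β := by
      rw [MeasureTheory.integral_sub hint1 hint2]
      rw [show (∫ t in Set.Ioo a y, (y - t) ^ r) = ∫ t in a..y, (y - t) ^ r by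
            rw [intervalIntegral.integral_of_le hay,
              MeasureTheory.integral_Ioc_eq_integral_Ioo],
          show (∫ t in Set.Ioo a y, (x - t) ^ r) = ∫ t in a..y, (x - t) ^ r by
            rw [intervalIntegral.integral_of_le hay,
              MeasureTheory.integral_Ioc_eq_integral_Ioo],
          aux_kernel_integral hr a y y, aux_kernel_integral hr a y x, sub_self,
          Real.zero_rpow (by rw [← hβdef]; exact hβ0.ne'), sub_zero, ← hβdef]
      ring
    have hle : ((y - a) ^ β - ((x - a) ^ β - (x - y) ^ β)) / β ≤ (x - y) ^ β / β := by
      have h5 : (y - a) ^ β ≤ (x - a) ^ β :=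
        Real.rpow_le_rpow (sub_nonneg.2 hay) (by linarith) hβ0.le
      exact div_le_div₀ (Real.rpow_nonneg hxy0 _) (by linarith) hβ0 le_rfl
    linarith
  -- put together
  have hS1 : |∫ t in a..y, f t * ((x - t) ^ (α - 1) - (y - t) ^ (α - 1))| ≤
      N * ((x - y) ^ β / β) ^ (1 / q) := by
    rw [intervalIntegral.integral_of_le hay, MeasureTheory.integral_Ioc_eq_integral_Ioo]
    exact keybound _ a y le_rfl hay hyb (hgx_ay.sub hgy_ay) hf_ay hker1
  have hS2 : |∫ t in y..x, f t * (x - t) ^ (α - 1)| ≤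
      N * ((x - y) ^ β / β) ^ (1 / q) := by
    rw [intervalIntegral.integral_of_le hyx, MeasureTheory.integral_Ioc_eq_integral_Ioo]
    exact keybound _ y x hay hyx hxb hgx_yx hf_yx hker2
  have hM : ((x - y) ^ β / β) ^ (1 / q) = (1 / β) ^ (1 / q) * (x - y) ^ (α - 1 / p) := by
    rw [div_eq_mul_one_div, Real.mul_rpow (Real.rpow_nonneg hxy0 _) (by positivity),
      ← Real.rpow_mul hxy0, hexp, mul_comm]
  rw [hsplit, abs_mul, abs_of_nonneg (by positivity : (0:ℝ) ≤ 1 / Real.Gamma α)]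
  calc (1 / Real.Gamma α) *
      |(∫ t in a..y, f t * ((x - t) ^ (α - 1) - (y - t) ^ (α - 1))) +
        ∫ t in y..x, f t * (x - t) ^ (α - 1)|
      ≤ (1 / Real.Gamma α) *
        (|∫ t in a..y, f t * ((x - t) ^ (α - 1) - (y - t) ^ (α - 1))| +
          |∫ t in y..x, f t * (x - t) ^ (α - 1)|) := by
        exact mul_le_mul_of_nonneg_left (abs_add_le _ _) (by positivity)
    _ ≤ (1 / Real.Gamma α) *
        (N * ((x - y) ^ β / β) ^ (1 / q) + N * ((x - y) ^ β / β) ^ (1 / q)) := by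
        exact mul_le_mul_of_nonneg_left (add_le_add hS1 hS2) (by positivity)
    _ = (1 / Real.Gamma α) * 2 * (1 / β) ^ (1 / q) * N * (x - y) ^ (α - 1 / p) := by
        rw [hM]; ring

/-- For `αp > 1` and `f ∈ L^p((a,b))`, the left fractional integral `I^α f`
is Hölder continuous of exponent `α - 1/p`:
`|I^α f(x) - I^α f(y)| ≤ C ‖f‖_{L^p} |x-y|^{α-1/p}`, `C = C(α,p)`. -/
theorem stmt10 (α p : ℝ) (hα : 0 < α) (hα1 : α < 1) (hp : 1 < p) (hαp : 1 < α * p) :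
    ∃ C > 0, ∀ a b : ℝ, a < b → ∀ f : ℝ → ℝ,
      MemLp f (ENNReal.ofReal p) (volume.restrict (Set.Ioo a b)) →
      ∀ x ∈ Set.Icc a b, ∀ y ∈ Set.Icc a b,
        |leftRLInt α a f x - leftRLInt α a f y|
          ≤ C * (eLpNorm f (ENNReal.ofReal p) (volume.restrict (Set.Ioo a b))).toReal
            * |x - y| ^ (α - 1 / p) := by
  set q : ℝ := p / (p - 1) with hqdef
  have hpq : p.HolderConjugate q := Real.HolderConjugate.conjExponent hp
  have hq0 : 0 < q := hpq.symm.pos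
  have hr : -1 < (α - 1) * q := by
    have h1 : (p - 1) * q = p := hpq.sub_one_mul_conj
    nlinarith [sub_pos.2 hp]
  have hβ0 : 0 < (α - 1) * q + 1 := by linarith
  have hΓ : 0 < Real.Gamma α := Real.Gamma_pos_of_pos hα
  refine ⟨(1 / Real.Gamma α) * 2 * (1 / ((α - 1) * q + 1)) ^ (1 / q), by positivity, ?_⟩
  intro a b hab f hmem x hx y hy
  have hN : (eLpNorm f (ENNReal.ofReal p) (volume.restrict (Set.Ioo a b))).toReal =
      (∫ t in Set.Ioo a b, ‖f t‖ ^ p) ^ (1 / p) := by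
    rw [hmem.eLpNorm_eq_integral_rpow_norm
        (by simp only [ne_eq, ENNReal.ofReal_eq_zero, not_le]; exact hpq.pos)
        ENNReal.ofReal_ne_top,
      ENNReal.toReal_ofReal
        (Real.rpow_nonneg
          (integral_nonneg fun t => Real.rpow_nonneg (norm_nonneg _) _) _),
      ENNReal.toReal_ofReal hpq.nonneg, one_div]
  rw [hN]
  rcases le_total y x with h | h
  · rw [abs_of_nonneg (sub_nonneg.2 h)]
    exact stmt10_core α p q hα hα1 hpq hr a b x y f hmem hy.1 h hx.2
  · rw [abs_sub_comm (leftRLInt α a f x), abs_sub_comm x y,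
      abs_of_nonneg (sub_nonneg.2 h)]
    exact stmt10_core α p q hα hα1 hpq hr a b y x f hmem hx.1 h hy.2
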